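/- The polynomial λ^4 - λ^3 - 2λ^2 - 4λ - 8 is irreducible over ℚ and has a real root in the interval (2.69, 2.70). -/
import Mathlib

open Polynomial

private lemma rep2' {F : Type*} [Field F] (p : F[X]) (h : p.natDegree ≤ 2) :
    p = C (p.coeff 2) * X ^ 2 + C (p.coeff 1) * X + C (p.coeff 0) := by
  ext n
  rcases n with _ | _ | _ | n
  · simp
  · simp
  · simp [coeff_X_pow]
  · rw [coeff_eq_zero_of_natDegree_lt (lt_of_le_of_lt h (by omega))]
    simp [coeff_X_pow, coeff_X]

private noncomputable def g3 : (ZMod 3)[X] := X ^ 4 - X ^ 3 - 2 * X ^ 2 - 4 * X - 8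

private lemma g3_natDegree : g3.natDegree = 4 := by unfold g3; compute_degree!

private lemma g3_monic : g3.Monic := by unfold g3; monicity!

private lemma g3_ne_zero : g3 ≠ 0 := fun h => by simpa [h] using g3_natDegree

private lemma g3_no_root (x : ZMod 3) : g3.eval x ≠ 0 := by
  unfold g3
  simp only [eval_sub, eval_mul, eval_pow, eval_X, eval_ofNat]
  revert x; decide

private lemma quartic_eq {F : Type*} [CommRing F] {a b c d a' b' c' d' : F}
    (h : X ^ 4 + C a * X ^ 3 + C b * X ^ 2 + C c * X ^ 1 + C d
       = X ^ 4 + C a' * X ^ 3 + C b' * X ^ 2 + C c' * X ^ 1 + C d') :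
    a = a' ∧ b = b' ∧ c = c' ∧ d = d' := by
  refine ⟨?_, ?_, ?_, ?_⟩
  · have := congrArg (fun f => Polynomial.coeff f 3) h
    simpa [coeff_X_pow] using this
  · have := congrArg (fun f => Polynomial.coeff f 2) h
    simpa [coeff_X_pow] using this
  · have := congrArg (fun f => Polynomial.coeff f 1) h
    simpa [coeff_X_pow] using this
  · have := congrArg (fun f => Polynomial.coeff f 0) h
    simpa [coeff_X_pow] using this

private lemma no_quad_factor (p q r s : ZMod 3)
    (h : g3 = (X ^ 2 + C p * X + C q) * (X ^ 2 + C r * X + C s)) : False := by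
  have hL : g3 = X ^ 4 + C (-1 : ZMod 3) * X ^ 3 + C (-2) * X ^ 2 + C (-4) * X ^ 1 + C (-8) := by
    unfold g3; simp only [map_neg, map_ofNat, map_one]; ring
  have hR : (X ^ 2 + C p * X + C q) * (X ^ 2 + C r * X + C s)
      = X ^ 4 + C (p + r) * X ^ 3 + C (q + s + p * r) * X ^ 2 + C (p * s + q * r) * X ^ 1
        + C (q * s) := by
    simp only [map_add, map_mul]; ring
  rw [hL, hR] at h
  obtain ⟨e1, e2, e3, e4⟩ := quartic_eq h
  clear h hL hR
  revert e1 e2 e3 e4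
  revert p q r s
  decide

private lemma natDegree_pos_of_factor {a : (ZMod 3)[X]} (ha : ¬IsUnit a) (ha0 : a ≠ 0) :
    0 < a.natDegree := by
  rcases Nat.eq_zero_or_pos a.natDegree with h0 | h
  · obtain ⟨c, hc⟩ := natDegree_eq_zero.mp h0
    exact absurd (isUnit_C.mpr (isUnit_iff_ne_zero.mpr (fun hc0 => ha0 (by rw [← hc, hc0, map_zero]))))
      (hc ▸ ha)
  · exact h

private lemma g3_irreducible : Irreducible g3 := by
  constructor
  · intro hu
    have := natDegree_eq_zero_of_isUnit hu
    rw [g3_natDegree] at this; omega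
  · intro a b h
    by_contra hab
    push_neg at hab
    obtain ⟨ha, hb⟩ := hab
    have ha0 : a ≠ 0 := fun h0 => g3_ne_zero (by rw [h, h0, zero_mul])
    have hb0 : b ≠ 0 := fun h0 => g3_ne_zero (by rw [h, h0, mul_zero])
    have hdeg : a.natDegree + b.natDegree = 4 := by
      rw [← natDegree_mul ha0 hb0, ← h, g3_natDegree]
    have hpa := natDegree_pos_of_factor ha ha0
    have hpb := natDegree_pos_of_factor hb hb0
    -- root case helper
    have root_case : ∀ c d : (ZMod 3)[X], c ≠ 0 → g3 = c * d → c.natDegree = 1 → False := by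
      intro c d hc0 hcd h1
      obtain ⟨x, hx⟩ := exists_root_of_degree_eq_one
        ((degree_eq_iff_natDegree_eq hc0).mpr h1)
      exact g3_no_root x (by rw [hcd, eval_mul, hx, zero_mul])
    have hub : a.natDegree ≤ 3 := by omega
    interval_cases hna : a.natDegree
    · exact root_case a b ha0 h hna
    · -- natDegree a = 2
      have hnb : b.natDegree = 2 := by omega
      have hlead : a.leadingCoeff * b.leadingCoeff = 1 := by
        rw [← leadingCoeff_mul, ← h]; exact g3_monic
      set u := a.leadingCoeff with hu
      set v := b.leadingCoeff with hv
      have huv : v * u = 1 := by rw [mul_comm]; exact hlead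
      have h' : g3 = (C v * a) * (C u * b) := by
        rw [h]; rw [mul_mul_mul_comm, ← C_mul, huv, C_1, one_mul]
      have hda : (C v * a).natDegree = 2 := by
        rw [natDegree_C_mul_eq_of_mul_eq_one hlead]; exact hna
      have hdb : (C u * b).natDegree = 2 := by
        rw [natDegree_C_mul_eq_of_mul_eq_one huv]; exact hnb
      have hca : (C v * a).coeff 2 = 1 := by
        rw [coeff_C_mul, ← hna]; exact huv
      have hcb : (C u * b).coeff 2 = 1 := by
        rw [coeff_C_mul, ← hnb]; exact hlead
      have ra := rep2' (C v * a) hda.le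
      have rb := rep2' (C u * b) hdb.le
      rw [hca, C_1, one_mul] at ra
      rw [hcb, C_1, one_mul] at rb
      exact no_quad_factor _ _ _ _ (by rw [h', ra, rb])
    · -- natDegree a = 3, so b has degree 1
      exact root_case b a hb0 (by rw [h, mul_comm]) (by omega)

private lemma int_irreducible : Irreducible (X ^ 4 - X ^ 3 - 2 * X ^ 2 - 4 * X - 8 : ℤ[X]) := by
  apply Monic.irreducible_of_irreducible_map (Int.castRingHom (ZMod 3))
  · monicity!
  · have hmap : (X ^ 4 - X ^ 3 - 2 * X ^ 2 - 4 * X - 8 : ℤ[X]).map (Int.castRingHom (ZMod 3))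
        = g3 := by
      unfold g3
      simp [Polynomial.map_sub, Polynomial.map_pow, Polynomial.map_mul, Polynomial.map_ofNat]
    rw [hmap]
    exact g3_irreducible


/-- The polynomial λ^4 - λ^3 - 2λ^2 - 4λ - 8 is irreducible over ℚ and has a real
root in the interval (2.69, 2.70). -/
theorem stmt_14 :
    Irreducible (X ^ 4 - X ^ 3 - 2 * X ^ 2 - 4 * X - 8 : ℚ[X]) ∧
      ∃ x : ℝ, x ∈ Set.Ioo (2.69 : ℝ) 2.70 ∧
        x ^ 4 - x ^ 3 - 2 * x ^ 2 - 4 * x - 8 = 0 := by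
  constructor
  · have hmonic : (X ^ 4 - X ^ 3 - 2 * X ^ 2 - 4 * X - 8 : ℤ[X]).Monic := by monicity!
    have h := (IsPrimitive.Int.irreducible_iff_irreducible_map_cast hmonic.isPrimitive).mp
      int_irreducible
    have hmap : (X ^ 4 - X ^ 3 - 2 * X ^ 2 - 4 * X - 8 : ℤ[X]).map (Int.castRingHom ℚ)
        = (X ^ 4 - X ^ 3 - 2 * X ^ 2 - 4 * X - 8 : ℚ[X]) := by
      simp [Polynomial.map_sub, Polynomial.map_pow, Polynomial.map_mul, Polynomial.map_ofNat]
    rwa [hmap] at h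
  · have hf : ContinuousOn (fun x : ℝ => x ^ 4 - x ^ 3 - 2 * x ^ 2 - 4 * x - 8)
        (Set.Icc (2.69 : ℝ) 2.70) := by fun_prop
    have h := intermediate_value_Ioo (by norm_num : (2.69 : ℝ) ≤ 2.70) hf
    have h0 : (0 : ℝ) ∈ Set.Ioo ((2.69:ℝ) ^ 4 - 2.69 ^ 3 - 2 * 2.69 ^ 2 - 4 * 2.69 - 8)
        ((2.70:ℝ) ^ 4 - 2.70 ^ 3 - 2 * 2.70 ^ 2 - 4 * 2.70 - 8) := by
      constructor <;> norm_num
    obtain ⟨x, hx, hfx⟩ := h h0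
    exact ⟨x, hx, hfx⟩
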